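/- For n ≥ r ≥ 2 and n ≥ 3, the K_{1,r}-structure connectivity of Q_n satisfies κ(Q_n; K_{1,r}) ≤ ⌈n/2⌉; that is, there exist ⌈n/2⌉ vertex-disjoint-or-overlapping subgraphs of Q_n each isomorphic to K_{1,r} whose removal disconnects Q_n. -/

import Mathlib

def Q (n : ℕ) : SimpleGraph (Fin n → ZMod 2) :=
  SimpleGraph.fromRel (fun u v => hammingDist u v = 1)

def FQ (n : ℕ) : SimpleGraph (Fin n → ZMod 2) :=
  SimpleGraph.fromRel (fun u v => hammingDist u v = 1 ∨ hammingDist u v = n)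

namespace HSC

/-- indicator vector with a 1 in coordinate `a` -/
def ev (n : ℕ) (a : ℕ) : Fin n → ZMod 2 := fun b => if b.val = a then 1 else 0

/-- `(2i+j) mod n`, written without `%` for omega-friendliness -/
def sig (n i j : ℕ) : ℕ := if 2*i + j < n then 2*i + j else 2*i + j - n

def ctr (n i : ℕ) : Fin n → ZMod 2 := ev n (sig n i 0) + ev n (sig n i 1)

def lf (n i j : ℕ) : Fin n → ZMod 2 := ctr n i + ev n (sig n i j)

def SS (n r i : ℕ) : Set (Fin n → ZMod 2) :=
  insert (ctr n i) (Set.range fun j : Fin r => lf n i j.val)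

lemma sig_lt {n i j : ℕ} (hi : 2*i < n) (hj : 2*i + j < 2*n) : sig n i j < n := by
  unfold sig; split <;> omega

lemma sum_ev (n a : ℕ) (ha : a < n) : ∑ b, ev n a b = 1 := by
  rw [Fintype.sum_eq_single (⟨a, ha⟩ : Fin n)]
  · simp [ev]
  · intro b hb
    have : b.val ≠ a := fun h => hb (Fin.ext h)
    simp [ev, this]

lemma sum_ctr {n i : ℕ} (hi : 2*i < n) : ∑ b, ctr n i b = 0 := by
  unfold ctr
  simp only [Pi.add_apply]
  rw [Finset.sum_add_distrib, sum_ev _ _ (sig_lt hi (by omega)),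
    sum_ev _ _ (sig_lt hi (by omega))]
  decide

lemma sum_lf {n i j : ℕ} (hi : 2*i < n) (hj : j < n) : ∑ b, lf n i j b = 1 := by
  unfold lf
  simp only [Pi.add_apply]
  rw [Finset.sum_add_distrib, sum_ctr hi, sum_ev _ _ (sig_lt hi (by omega))]
  decide

lemma addadd {n : ℕ} (f g : Fin n → ZMod 2) : f + g + g = f := by
  funext b
  have : ∀ x y : ZMod 2, x + y + y = x := by decide
  exact this _ _

lemma addadd2 {n : ℕ} (f g : Fin n → ZMod 2) : f + g + f = g := by
  funext b
  have : ∀ x y : ZMod 2, x + y + x = y := by decide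
  exact this _ _

lemma hdist {n : ℕ} (f : Fin n → ZMod 2) (m : ℕ) (hm : m < n) :
    hammingDist f (f + ev n m) = 1 := by
  unfold hammingDist
  have : ({i | f i ≠ (f + ev n m) i} : Finset (Fin n)) = {⟨m, hm⟩} := by
    ext b
    simp only [Finset.mem_filter, Finset.mem_univ, true_and, Finset.mem_singleton,
      Pi.add_apply, ev, ne_eq, Fin.ext_iff]
    constructor
    · intro h
      by_contra hb
      simp [hb] at h
    · intro h
      refine Finset.mem_filter.mpr ⟨Finset.mem_univ _, ?_⟩
      simp only [h, if_pos]
      have : ∀ x : ZMod 2, ¬ x = x + 1 := by decide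
      exact this _
  rw [this]
  rfl

lemma z2one (x : ZMod 2) (h : x ≠ 0) : x = 1 := by revert h; revert x; decide

lemma dist_one {n : ℕ} (w : Fin n → ZMod 2) (hw : hammingDist (0 : Fin n → ZMod 2) w = 1) :
    ∃ m : Fin n, w = ev n m.val := by
  unfold hammingDist at hw
  rw [Finset.card_eq_one] at hw
  obtain ⟨a, ha⟩ := hw
  refine ⟨a, funext fun b => ?_⟩
  have hmem : ∀ c : Fin n, ((0 : Fin n → ZMod 2) c ≠ w c) ↔ c = a := by
    intro c
    constructor
    · intro h
      have : c ∈ ({i | (0 : Fin n → ZMod 2) i ≠ w i} : Finset (Fin n)) := by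
        simpa using h
      rw [ha] at this; simpa using this
    · intro h
      subst h
      have : c ∈ ({c} : Finset (Fin n)) := by simp
      rw [← ha] at this; simpa using this
  by_cases hb : b = a
  · subst hb
    have h0 : (0 : Fin n → ZMod 2) b ≠ w b := (hmem b).mpr rfl
    have h1 : w b ≠ 0 := fun h => h0 (by simp [h])
    rw [z2one _ h1]
    simp [ev]
  · have : ¬ ((0 : Fin n → ZMod 2) b ≠ w b) := fun h => hb ((hmem b).mp h)
    push_neg at this
    rw [← this]
    have : b.val ≠ a.val := fun h => hb (Fin.ext h)
    simp [ev, this]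

lemma ev_inj {n a b : ℕ} (ha : a < n) (h : ev n a = ev n b) : a = b := by
  by_cases hab : a = b
  · exact hab
  · have := congrFun h ⟨a, ha⟩
    simp only [ev, if_pos rfl] at this
    rw [if_neg hab] at this
    exact absurd this (by decide)

lemma sig_inj {n i a b : ℕ} (hi : 2*i < n) (ha : a < n) (hb : b < n)
    (h : sig n i a = sig n i b) : a = b := by
  unfold sig at h; split_ifs at h <;> omega

lemma lf_inj {n r i : ℕ} (hi : 2*i < n) (hrn : r ≤ n) :
    Function.Injective (fun j : Fin r => lf n i j.val) := by
  intro a b h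
  simp only [lf] at h
  have h2 : ev n (sig n i a.val) = ev n (sig n i b.val) := add_left_cancel h
  have ha : a.val < n := lt_of_lt_of_le a.isLt hrn
  have hb : b.val < n := lt_of_lt_of_le b.isLt hrn
  exact Fin.ext (sig_inj hi ha hb (ev_inj (sig_lt hi (by omega)) h2))

lemma adj_ctr_lf {n i j : ℕ} (hi : 2*i < n) (hj : j < n) :
    (Q n).Adj (ctr n i) (lf n i j) := by
  rw [Q, SimpleGraph.fromRel_adj]
  constructor
  · intro h
    have := congrArg (fun f => ∑ b, f b) h
    rw [sum_ctr hi, sum_lf hi hj] at this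
    exact absurd this (by decide)
  · exact Or.inl (hdist _ _ (sig_lt hi (by omega)))

lemma zero_not_mem {n r i : ℕ} (hi : 2*i < n) (hn : 3 ≤ n) (hrn : r ≤ n) :
    (0 : Fin n → ZMod 2) ∉ SS n r i := by
  intro h
  rcases h with h | ⟨j, hj⟩
  · -- 0 = ctr
    have := congrFun h ⟨2*i, by omega⟩
    simp only [ctr, ev, sig, Pi.add_apply, Pi.zero_apply] at this
    split_ifs at this <;> first | omega | (revert this; decide)
  · -- lf = 0, parity
    have := congrArg (fun f => ∑ b, f b) hj
    simp only at this
    rw [sum_lf hi (lt_of_lt_of_le j.isLt hrn)] at this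
    simp at this

lemma v_not_mem {n r i : ℕ} (hi : 2*i < n) (hn : 3 ≤ n) (hrn : r ≤ n) :
    (ev n 1 + ev n 2) ∉ SS n r i := by
  intro h
  rcases h with h | ⟨j, hj⟩
  · -- ctr = v
    have h1 := congrFun h.symm ⟨1, by omega⟩
    have h2 := congrFun h.symm ⟨2, by omega⟩
    simp only [ctr, ev, Pi.add_apply, sig] at h1 h2
    split_ifs at h1 h2 <;> first
      | omega
      | (revert h1; decide)
      | (revert h2; decide)
  · -- lf = v, parity
    have := congrArg (fun f => ∑ b, f b) hj
    simp only [Pi.add_apply] at this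
    rw [Finset.sum_add_distrib, sum_ev n 1 (by omega), sum_ev n 2 (by omega)] at this
    rw [sum_lf hi (lt_of_lt_of_le j.isLt hrn)] at this
    exact absurd this (by decide)

lemma cover {n r : ℕ} (hr : 2 ≤ r) (hrn : r ≤ n) (m : ℕ) (hm : m < n) :
    ∃ i : ℕ, i < (n+1)/2 ∧ ev n m ∈ SS n r i := by
  refine ⟨m/2, by omega, ?_⟩
  rcases Nat.even_or_odd m with he | ho
  · have hs0 : sig n (m/2) 0 = m := by
      unfold sig; rcases he with ⟨t, ht⟩; split <;> omega
    refine Or.inr ⟨⟨1, by omega⟩, ?_⟩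
    show lf n (m/2) 1 = ev n m
    unfold lf ctr
    rw [hs0]
    exact addadd _ _
  · have hs1 : sig n (m/2) 1 = m := by
      unfold sig; rcases ho with ⟨t, ht⟩; split <;> omega
    refine Or.inr ⟨⟨0, by omega⟩, ?_⟩
    show lf n (m/2) 0 = ev n m
    unfold lf ctr
    rw [hs1]
    exact addadd2 _ _


end HSC

/-- For n ≥ r ≥ 2, n ≥ 3, there exist ⌈n/2⌉ subgraphs of Q_n each isomorphic to
K_{1,r} whose removal disconnects Q_n; hence κ(Q_n; K_{1,r}) ≤ ⌈n/2⌉. -/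
theorem hypercube_star_structure_cut (n r : ℕ) (hr : 2 ≤ r) (hrn : r ≤ n) (hn : 3 ≤ n) :
    ∃ S : Fin ((n + 1) / 2) → Set (Fin n → ZMod 2),
      (∀ i, ∃ (x : Fin n → ZMod 2) (ℓ : Fin r → (Fin n → ZMod 2)),
        Function.Injective ℓ ∧ (∀ j, (Q n).Adj x (ℓ j)) ∧ S i = insert x (Set.range ℓ)) ∧
      {v | ∀ i, v ∉ S i}.Nonempty ∧
      ¬ ((Q n).induce {v | ∀ i, v ∉ S i}).Connected := by
  have hi2 : ∀ i : Fin ((n+1)/2), 2 * i.val < n := fun i => by have := i.isLt; omega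
  refine ⟨fun i => HSC.SS n r i.val, ?_, ?_, ?_⟩
  · intro i
    refine ⟨HSC.ctr n i.val, fun j => HSC.lf n i.val j.val, HSC.lf_inj (hi2 i) hrn,
      fun j => HSC.adj_ctr_lf (hi2 i) (lt_of_lt_of_le j.isLt hrn), rfl⟩
  · exact ⟨0, fun i => HSC.zero_not_mem (hi2 i) hn hrn⟩
  · intro hcon
    have h0 : (0 : Fin n → ZMod 2) ∈ {v | ∀ i : Fin ((n+1)/2), v ∉ HSC.SS n r i.val} :=
      fun i => HSC.zero_not_mem (hi2 i) hn hrn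
    have hv : (HSC.ev n 1 + HSC.ev n 2) ∈
        {v | ∀ i : Fin ((n+1)/2), v ∉ HSC.SS n r i.val} :=
      fun i => HSC.v_not_mem (hi2 i) hn hrn
    have hne : (0 : Fin n → ZMod 2) ≠ HSC.ev n 1 + HSC.ev n 2 := by
      intro h
      have := congrFun h ⟨1, by omega⟩
      simp only [HSC.ev, Pi.add_apply, Pi.zero_apply] at this
      norm_num at this
    obtain ⟨p⟩ := hcon.preconnected ⟨0, h0⟩ ⟨HSC.ev n 1 + HSC.ev n 2, hv⟩
    have hnn : ¬ p.Nil := SimpleGraph.Walk.not_nil_of_ne (by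
      intro h
      exact hne (congrArg Subtype.val h))
    rw [SimpleGraph.Walk.not_nil_iff] at hnn
    obtain ⟨u, hadj, q, rfl⟩ := hnn
    have hadj' : (Q n).Adj 0 u.val := hadj
    rw [Q, SimpleGraph.fromRel_adj] at hadj'
    have hd : hammingDist (0 : Fin n → ZMod 2) u.val = 1 := by
      rcases hadj'.2 with h | h
      · exact h
      · rwa [hammingDist_comm] at h
    obtain ⟨m, hm⟩ := HSC.dist_one _ hd
    obtain ⟨i, hik, hmem⟩ := HSC.cover hr hrn m.val m.isLt
    exact u.prop ⟨i, hik⟩ (hm ▸ hmem)
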